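/- Let G be a graph (simple, connected, locally finite, with edges of arbitrary lengths), L(G) its line graph, and h : L(G) → G the canonical map. Then h is an (l_max/2)-full (1, 2 l_max)-quasi-isometry, where l_max := sup_{e ∈ E(G)} L(e); that is, d_{L(G)}(x,y) − 2 l_max ≤ d_G(h(x),h(y)) ≤ d_{L(G)}(x,y) for all x,y ∈ L(G), and every point of G is within distance l_max/2 of h(L(G)). -/

import Mathlib

open Metric
open scoped ENNReal

noncomputable section

/-- A geodesic arc from `x` to `y` in a metric space `X`: the image of an isometric
embedding of the interval `[0, dist x y]` sending `0` to `x` and `dist x y` to `y`. -/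
def IsGeodesicArc {X : Type} [MetricSpace X] (x y : X) (s : Set X) : Prop :=
  ∃ γ : ℝ → X, γ 0 = x ∧ γ (dist x y) = y ∧
    (∀ a ∈ Set.Icc (0 : ℝ) (dist x y), ∀ b ∈ Set.Icc (0 : ℝ) (dist x y),
      dist (γ a) (γ b) = |a - b|) ∧
    s = γ '' Set.Icc (0 : ℝ) (dist x y)

/-- A geodesic triangle with vertices `x, y, z` and sides `s₁ = [xy]`, `s₂ = [yz]`,
`s₃ = [zx]`. -/
def IsGeodTriangle {X : Type} [MetricSpace X] (x y z : X) (s₁ s₂ s₃ : Set X) : Prop :=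
  IsGeodesicArc x y s₁ ∧ IsGeodesicArc y z s₂ ∧ IsGeodesicArc z x s₃

/-- The sharp constant for thinness of the side `s` with respect to the set `t`
(the union of the other sides): the supremum over points of `s` of the distance to `t`. -/
def sideThin {X : Type} [MetricSpace X] (s t : Set X) : ℝ≥0∞ :=
  ⨆ p ∈ s, ENNReal.ofReal (infDist p t)

/-- The sharp thin constant `δ(T)` of a triangle (or trilateral) with sides
`s₁ s₂ s₃`: a triangle is `δ`-thin iff `triThin s₁ s₂ s₃ ≤ δ`. -/
def triThin {X : Type} [MetricSpace X] (s₁ s₂ s₃ : Set X) : ℝ≥0∞ :=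
  max (sideThin s₁ (s₂ ∪ s₃)) (max (sideThin s₂ (s₃ ∪ s₁)) (sideThin s₃ (s₁ ∪ s₂)))

/-- The hyperbolicity constant `δ(X)` of a metric space:
`δ(X) = sup { δ(T) : T is a geodesic triangle in X }` (with value in `[0,∞]`). -/
def hypConst (X : Type) [MetricSpace X] : ℝ≥0∞ :=
  ⨆ (x : X) (y : X) (z : X) (s₁ : Set X) (s₂ : Set X) (s₃ : Set X)
    (_ : IsGeodTriangle x y z s₁ s₂ s₃), triThin s₁ s₂ s₃

/-- A simple closed curve in a metric space: an injective continuous image of a circle. -/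
def IsSimpleClosedCurve {X : Type} [MetricSpace X] (s : Set X) : Prop :=
  ∃ f : AddCircle (1 : ℝ) → X, Continuous f ∧ Function.Injective f ∧ Set.range f = s

/-- A simple, connected, locally finite graph with edges of arbitrary (positive) lengths,
regarded as a geodesic metric space `X`: each edge `[u,v]` of length `ℓ s(u,v)` is
identified with the real interval `[0, ℓ s(u,v)]` via the parametrization `param u v`,
and the distance is the shortest-path distance. -/
structure MetricGraph where
  /-- the vertices -/
  V : Type
  /-- the (simple) graph structure -/
  G : SimpleGraph V
  conn : G.Connected
  locFin : ∀ v : V, (G.neighborSet v).Finite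
  /-- the length of each edge -/
  ℓ : Sym2 V → ℝ
  ℓ_pos : ∀ e ∈ G.edgeSet, 0 < ℓ e
  /-- the set of points of the graph, as a metric space -/
  X : Type
  [mX : MetricSpace X]
  /-- the inclusion of the vertices among the points -/
  ι : V → X
  ι_inj : Function.Injective ι
  /-- the arclength parametrization of each edge by `[0, ℓ s(u,v)]` -/
  param : ∀ u v : V, G.Adj u v → ℝ → X
  param_zero : ∀ (u v : V) (h : G.Adj u v), param u v h 0 = ι u
  param_symm : ∀ (u v : V) (h : G.Adj u v) (t : ℝ),
    param v u h.symm t = param u v h (ℓ s(u, v) - t)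
  param_injOn : ∀ (u v : V) (h : G.Adj u v),
    Set.InjOn (param u v h) (Set.Icc 0 (ℓ s(u, v)))
  /-- every point of the graph lies on some edge -/
  cover : ∀ x : X, ∃ (u v : V) (h : G.Adj u v),
    ∃ t ∈ Set.Icc (0 : ℝ) (ℓ s(u, v)), x = param u v h t
  /-- the distance between vertices is the shortest-path distance -/
  dist_vertex : ∀ u v : V,
    dist (ι u) (ι v) = sInf { L : ℝ | ∃ w : G.Walk u v, L = (w.edges.map ℓ).sum }
  /-- the distance from an interior point of an edge to any other point is realized
  either within the edge or through one of the two endpoints of the edge -/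
  dist_eq : ∀ (u v : V) (h : G.Adj u v), ∀ t ∈ Set.Icc (0 : ℝ) (ℓ s(u, v)), ∀ y : X,
    dist (param u v h t) y =
      sInf ({ t + dist (ι u) y, (ℓ s(u, v) - t) + dist (ι v) y } ∪
            { d : ℝ | ∃ r ∈ Set.Icc (0 : ℝ) (ℓ s(u, v)), y = param u v h r ∧ d = |t - r| })
  /-- the space of points is a geodesic metric space -/
  geodesic : ∀ x y : X, ∃ s : Set X, IsGeodesicArc x y s

attribute [instance] MetricGraph.mX

namespace MetricGraph

variable (M : MetricGraph)

/-- The set of points of an edge of the graph. -/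
def edgePoints {u v : M.V} (h : M.G.Adj u v) : Set M.X :=
  M.param u v h '' Set.Icc 0 (M.ℓ s(u, v))

/-- The midpoint `Pm(e)` of an edge. -/
def midpt {u v : M.V} (h : M.G.Adj u v) : M.X :=
  M.param u v h (M.ℓ s(u, v) / 2)

/-- `PMV(G)`: the set of points which are vertices or midpoints of edges. -/
def PMV : Set M.X :=
  Set.range M.ι ∪ { x | ∃ (u v : M.V) (h : M.G.Adj u v), x = M.midpt h }

/-- `l_max = sup_{e ∈ E(G)} L(e)` (with value in `[0,∞]`). -/
def lmax : ℝ≥0∞ :=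
  ⨆ e : M.G.edgeSet, ENNReal.ofReal (M.ℓ e.1)

/-- A cycle graph: a (finite) connected graph in which every vertex has degree 2.
(Connectedness is part of the `MetricGraph` structure.) -/
def IsCycleGraph : Prop :=
  Finite M.V ∧ ∀ v : M.V, (M.G.neighborSet v).ncard = 2

end MetricGraph

/-- The line graph `L(G)` of a metric graph `G`: its vertices correspond to the edges
of `G`, two of them being adjacent when the corresponding edges of `G` share a vertex;
the edge `[V_{e_i}, V_{e_j}]` of `L(G)` has length `(L(e_i) + L(e_j))/2`. -/
structure LineGraphOf (M : MetricGraph) where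
  /-- the line graph, as a metric graph -/
  L : MetricGraph
  /-- the vertices of `L(G)` correspond to the edges of `G` -/
  vEquiv : L.V ≃ M.G.edgeSet
  adj_iff : ∀ a b : L.V, L.G.Adj a b ↔
    (a ≠ b ∧ ∃ v : M.V, v ∈ (vEquiv a : Sym2 M.V) ∧ v ∈ (vEquiv b : Sym2 M.V))
  len_eq : ∀ a b : L.V, L.G.Adj a b →
    L.ℓ s(a, b) = (M.ℓ (vEquiv a : Sym2 M.V) + M.ℓ (vEquiv b : Sym2 M.V)) / 2

/-- The set `PM_LV(L(G))`: points of `L(G)` which are vertices or points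
`Pm_L([V_{e_i},V_{e_j}])`, i.e. the point of the edge `[V_{e_i},V_{e_j}]` at distance
`L(e_i)/2` from `V_{e_i}`. -/
def lineGraphPMLV (M : MetricGraph) (LG : LineGraphOf M) : Set LG.L.X :=
  Set.range LG.L.ι ∪
    { x | ∃ (a b : LG.L.V) (hab : LG.L.G.Adj a b),
        x = LG.L.param a b hab (M.ℓ (LG.vEquiv a : Sym2 M.V) / 2) }

/-- The canonical map `h : L(G) → G`.  It sends the vertex `V_e` to the midpoint `Pm(e)`
of `e`, the point `Pm_L([V_{e_i},V_{e_j}])` to the common vertex `e_i ∩ e_j`, and maps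
each half-edge of `L(G)` isometrically onto the corresponding half-edge of `G`:
if `e_a = s(u,w)` and `w` is the common vertex of `e_a` and `e_b`, then the point of the
edge `[V_{e_a},V_{e_b}]` at distance `t ∈ [0, L(e_a)/2]` from `V_{e_a}` is sent to the
point of `e_a` at distance `L(e_a)/2 + t` from `u`. -/
structure CanonicalMap (M : MetricGraph) (LG : LineGraphOf M) where
  /-- the underlying map on points -/
  h : LG.L.X → M.X
  h_halfEdge : ∀ (a b : LG.L.V) (hab : LG.L.G.Adj a b) (u w : M.V) (huw : M.G.Adj u w),
    (LG.vEquiv a : Sym2 M.V) = s(u, w) → w ∈ (LG.vEquiv b : Sym2 M.V) →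
    ∀ t ∈ Set.Icc (0 : ℝ) (M.ℓ (LG.vEquiv a : Sym2 M.V) / 2),
      h (LG.L.param a b hab t) =
        M.param u w huw (M.ℓ (LG.vEquiv a : Sym2 M.V) / 2 + t)

end

section AuxMG

namespace MetricGraph

variable (M : MetricGraph)

lemma ℓ_nonneg {u v : M.V} (h : M.G.Adj u v) : 0 ≤ M.ℓ s(u, v) :=
  (M.ℓ_pos _ (M.G.mem_edgeSet.mpr h)).le

lemma param_last {u v : M.V} (h : M.G.Adj u v) :
    M.param u v h (M.ℓ s(u, v)) = M.ι v := by
  have h1 := M.param_symm u v h 0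
  rw [M.param_zero v u h.symm, sub_zero] at h1
  exact h1.symm

/-- The set appearing on the RHS of `dist_eq`. -/
def dSet {u v : M.V} (h : M.G.Adj u v) (t : ℝ) (y : M.X) : Set ℝ :=
  { t + dist (M.ι u) y, (M.ℓ s(u, v) - t) + dist (M.ι v) y } ∪
  { d : ℝ | ∃ r ∈ Set.Icc (0 : ℝ) (M.ℓ s(u, v)), y = M.param u v h r ∧ d = |t - r| }

lemma dist_eq' {u v : M.V} (h : M.G.Adj u v) {t : ℝ} (ht : t ∈ Set.Icc 0 (M.ℓ s(u, v)))
    (y : M.X) : dist (M.param u v h t) y = sInf (M.dSet h t y) :=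
  M.dist_eq u v h t ht y

lemma dSet_lb {u v : M.V} (h : M.G.Adj u v) {t : ℝ} (ht : t ∈ Set.Icc 0 (M.ℓ s(u, v)))
    (y : M.X) : ∀ z ∈ M.dSet h t y, 0 ≤ z := by
  rintro z (hz | ⟨r, hr, hy, rfl⟩)
  · simp only [Set.mem_insert_iff, Set.mem_singleton_iff] at hz
    rcases hz with rfl | rfl
    · exact add_nonneg ht.1 dist_nonneg
    · exact add_nonneg (by linarith [ht.2]) dist_nonneg
  · exact abs_nonneg _

lemma dist_le_of_mem {u v : M.V} (h : M.G.Adj u v) {t : ℝ}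
    (ht : t ∈ Set.Icc 0 (M.ℓ s(u, v))) {y : M.X} {z : ℝ} (hz : z ∈ M.dSet h t y) :
    dist (M.param u v h t) y ≤ z := by
  rw [M.dist_eq' h ht y]
  exact csInf_le ⟨0, M.dSet_lb h ht y⟩ hz

lemma le_dist {u v : M.V} (h : M.G.Adj u v) {t : ℝ}
    (ht : t ∈ Set.Icc 0 (M.ℓ s(u, v))) (y : M.X) {c : ℝ}
    (hc : ∀ z ∈ M.dSet h t y, c ≤ z) : c ≤ dist (M.param u v h t) y := by
  rw [M.dist_eq' h ht y]
  exact le_csInf ⟨_, Or.inl (Set.mem_insert _ _)⟩ hc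

lemma dist_param_le_abs {u v : M.V} (h : M.G.Adj u v) {t s : ℝ}
    (ht : t ∈ Set.Icc 0 (M.ℓ s(u, v))) (hs : s ∈ Set.Icc 0 (M.ℓ s(u, v))) :
    dist (M.param u v h t) (M.param u v h s) ≤ |t - s| :=
  M.dist_le_of_mem h ht (Or.inr ⟨s, hs, rfl, rfl⟩)

lemma dist_param_left {u v : M.V} (h : M.G.Adj u v) {t : ℝ}
    (ht : t ∈ Set.Icc 0 (M.ℓ s(u, v))) : dist (M.param u v h t) (M.ι u) ≤ t := by
  have h1 := M.dist_param_le_abs h ht (Set.left_mem_Icc.mpr (M.ℓ_nonneg h))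
  rw [M.param_zero u v h] at h1
  simpa [abs_of_nonneg ht.1] using h1

lemma dist_param_right {u v : M.V} (h : M.G.Adj u v) {t : ℝ}
    (ht : t ∈ Set.Icc 0 (M.ℓ s(u, v))) :
    dist (M.param u v h t) (M.ι v) ≤ M.ℓ s(u, v) - t := by
  have h1 := M.dist_param_le_abs h ht (Set.right_mem_Icc.mpr (M.ℓ_nonneg h))
  rw [M.param_last h] at h1
  calc dist (M.param u v h t) (M.ι v) ≤ |t - M.ℓ s(u, v)| := h1
    _ = M.ℓ s(u, v) - t := by rw [abs_sub_comm, abs_of_nonneg (by linarith [ht.2])]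

lemma walkSum_nonneg {u v : M.V} (W : M.G.Walk u v) : 0 ≤ (W.edges.map M.ℓ).sum := by
  apply List.sum_nonneg
  intro x hx
  obtain ⟨e, he, rfl⟩ := List.mem_map.mp hx
  exact (M.ℓ_pos e (W.edges_subset_edgeSet he)).le

lemma dist_vertex_le_walk {u v : M.V} (W : M.G.Walk u v) :
    dist (M.ι u) (M.ι v) ≤ (W.edges.map M.ℓ).sum := by
  rw [M.dist_vertex u v]
  exact csInf_le ⟨0, by rintro z ⟨W', rfl⟩; exact M.walkSum_nonneg W'⟩ ⟨W, rfl⟩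

lemma le_dist_vertex {u v : M.V} {c : ℝ}
    (hc : ∀ W : M.G.Walk u v, c ≤ (W.edges.map M.ℓ).sum) :
    c ≤ dist (M.ι u) (M.ι v) := by
  rw [M.dist_vertex u v]
  obtain ⟨W⟩ := M.conn.preconnected u v
  exact le_csInf ⟨_, W, rfl⟩ (by rintro z ⟨W', rfl⟩; exact hc W')

lemma dist_adj {u v : M.V} (h : M.G.Adj u v) : dist (M.ι u) (M.ι v) ≤ M.ℓ s(u, v) := by
  have h1 := M.dist_param_le_abs h (Set.left_mem_Icc.mpr (M.ℓ_nonneg h))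
    (Set.right_mem_Icc.mpr (M.ℓ_nonneg h))
  rw [M.param_zero u v h, M.param_last h] at h1
  calc dist (M.ι u) (M.ι v) ≤ |0 - M.ℓ s(u, v)| := h1
    _ = M.ℓ s(u, v) := by rw [zero_sub, abs_neg, abs_of_nonneg (M.ℓ_nonneg h)]

end MetricGraph

end AuxMG

section AuxLG

namespace LineGraphOf

variable {M : MetricGraph} (LG : LineGraphOf M)

/-- The edge of `G` corresponding to a vertex of `L(G)`. -/
def E (a : LG.L.V) : Sym2 M.V := (LG.vEquiv a : Sym2 M.V)

lemma E_mem (a : LG.L.V) : LG.E a ∈ M.G.edgeSet := (LG.vEquiv a).2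

lemma E_pos (a : LG.L.V) : 0 < M.ℓ (LG.E a) := M.ℓ_pos _ (LG.E_mem a)

lemma E_inj {a b : LG.L.V} (h : LG.E a = LG.E b) : a = b :=
  LG.vEquiv.injective (Subtype.ext h)

lemma exists_adj (a : LG.L.V) : ∃ b, LG.L.G.Adj a b := by
  obtain ⟨u, v, h, t, ht, hx⟩ := LG.L.cover (LG.L.ι a)
  obtain ⟨W⟩ := LG.L.conn.preconnected a u
  cases W with
  | nil => exact ⟨v, h⟩
  | cons h' _ => exact ⟨_, h'⟩

lemma adj_data {a b : LG.L.V} (hab : LG.L.G.Adj a b) :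
    ∃ (u w : M.V) (huw : M.G.Adj u w), LG.E a = s(u, w) ∧ w ∈ LG.E b := by
  obtain ⟨-, w, hwa, hwb⟩ := (LG.adj_iff a b).mp hab
  obtain ⟨u, hu⟩ := Sym2.mem_iff_exists.mp hwa
  have hEA : LG.E a = s(u, w) := by rw [show LG.E a = _ from hu, Sym2.eq_swap]
  have huw : M.G.Adj u w := M.G.mem_edgeSet.mp (hEA ▸ LG.E_mem a)
  exact ⟨u, w, huw, hEA, hwb⟩

lemma lenL {a b : LG.L.V} (hab : LG.L.G.Adj a b) :
    LG.L.ℓ s(a, b) = (M.ℓ (LG.E a) + M.ℓ (LG.E b)) / 2 := LG.len_eq a b hab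

variable (hm : CanonicalMap M LG)

lemma h_param {a b : LG.L.V} (hab : LG.L.G.Adj a b) {u w : M.V} (huw : M.G.Adj u w)
    (hEA : LG.E a = s(u, w)) (hwb : w ∈ LG.E b) {t : ℝ}
    (ht : t ∈ Set.Icc 0 (M.ℓ (LG.E a) / 2)) :
    hm.h (LG.L.param a b hab t) = M.param u w huw (M.ℓ (LG.E a) / 2 + t) :=
  hm.h_halfEdge a b hab u w huw hEA hwb t ht

lemma h_vertex {a b : LG.L.V} (hab : LG.L.G.Adj a b) {u w : M.V} (huw : M.G.Adj u w)
    (hEA : LG.E a = s(u, w)) (hwb : w ∈ LG.E b) :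
    hm.h (LG.L.ι a) = M.param u w huw (M.ℓ (LG.E a) / 2) := by
  rw [← LG.L.param_zero a b hab,
    LG.h_param hm hab huw hEA hwb ⟨le_refl 0, by linarith [LG.E_pos a]⟩, add_zero]

lemma dist_h_left {a b : LG.L.V} (hab : LG.L.G.Adj a b) {t : ℝ}
    (ht : t ∈ Set.Icc 0 (LG.L.ℓ s(a, b))) :
    dist (hm.h (LG.L.param a b hab t)) (hm.h (LG.L.ι a)) ≤ t := by
  obtain ⟨u, w, huw, hEA, hwb⟩ := LG.adj_data hab
  have hlL := LG.lenL hab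
  have hla := LG.E_pos a
  have hlb := LG.E_pos b
  have hluw : M.ℓ s(u, w) = M.ℓ (LG.E a) := by rw [← hEA]
  have hva := LG.h_vertex hm hab huw hEA hwb
  rcases le_total t (M.ℓ (LG.E a) / 2) with h1 | h1
  · rw [LG.h_param hm hab huw hEA hwb ⟨ht.1, h1⟩, hva]
    have h2 := M.dist_param_le_abs huw
      (t := M.ℓ (LG.E a) / 2 + t) (s := M.ℓ (LG.E a) / 2)
      ⟨by linarith [ht.1], by rw [hluw]; linarith⟩
      ⟨by linarith, by rw [hluw]; linarith⟩
    calc dist _ _ ≤ |M.ℓ (LG.E a) / 2 + t - M.ℓ (LG.E a) / 2| := h2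
      _ = t := by rw [add_sub_cancel_left, abs_of_nonneg ht.1]
  · -- second half-edge
    obtain ⟨u', hu'⟩ := Sym2.mem_iff_exists.mp hwb
    have hEb : LG.E b = s(u', w) := by rw [show LG.E b = _ from hu', Sym2.eq_swap]
    have hu'w : M.G.Adj u' w := M.G.mem_edgeSet.mp (hEb ▸ LG.E_mem b)
    have hwa : w ∈ LG.E a := by rw [hEA]; exact Sym2.mem_mk_right u w
    have hlu'w : M.ℓ s(u', w) = M.ℓ (LG.E b) := by rw [← hEb]
    have hx : LG.L.param a b hab t = LG.L.param b a hab.symm (LG.L.ℓ s(a, b) - t) := by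
      rw [LG.L.param_symm a b hab (LG.L.ℓ s(a, b) - t), sub_sub_cancel]
    rw [hx, LG.h_param hm hab.symm hu'w hEb hwa
      ⟨by linarith [ht.2], by linarith⟩, hva]
    have hd1 : dist (M.param u' w hu'w (M.ℓ (LG.E b) / 2 + (LG.L.ℓ s(a, b) - t))) (M.ι w)
        ≤ t - M.ℓ (LG.E a) / 2 := by
      have h3 := M.dist_param_right hu'w
        (t := M.ℓ (LG.E b) / 2 + (LG.L.ℓ s(a, b) - t))
        ⟨by linarith [ht.2], by rw [hlu'w]; linarith⟩
      rw [hlu'w] at h3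
      linarith
    have hd2 : dist (M.ι w) (M.param u w huw (M.ℓ (LG.E a) / 2)) ≤ M.ℓ (LG.E a) / 2 := by
      rw [dist_comm]
      have h3 := M.dist_param_right huw (t := M.ℓ (LG.E a) / 2)
        ⟨by linarith, by rw [hluw]; linarith⟩
      rw [hluw] at h3
      linarith
    calc dist _ _ ≤ _ + _ := dist_triangle _ (M.ι w) _
      _ ≤ (t - M.ℓ (LG.E a) / 2) + M.ℓ (LG.E a) / 2 := add_le_add hd1 hd2
      _ = t := by ring

lemma dist_h_right {a b : LG.L.V} (hab : LG.L.G.Adj a b) {t : ℝ}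
    (ht : t ∈ Set.Icc 0 (LG.L.ℓ s(a, b))) :
    dist (hm.h (LG.L.param a b hab t)) (hm.h (LG.L.ι b)) ≤ LG.L.ℓ s(a, b) - t := by
  have hswap : LG.L.ℓ s(b, a) = LG.L.ℓ s(a, b) := by rw [Sym2.eq_swap]
  have h2 := LG.dist_h_left hm hab.symm (t := LG.L.ℓ s(a, b) - t)
    ⟨by linarith [ht.2], by rw [hswap]; linarith [ht.1]⟩
  rwa [LG.L.param_symm a b hab (LG.L.ℓ s(a, b) - t), sub_sub_cancel] at h2

lemma dist_h_param_aux {a b : LG.L.V} (hab : LG.L.G.Adj a b) {t r : ℝ}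
    (ht : t ∈ Set.Icc 0 (LG.L.ℓ s(a, b))) (hr : r ∈ Set.Icc 0 (LG.L.ℓ s(a, b)))
    (htr : t ≤ r) :
    dist (hm.h (LG.L.param a b hab t)) (hm.h (LG.L.param a b hab r)) ≤ r - t := by
  obtain ⟨u, w, huw, hEA, hwb⟩ := LG.adj_data hab
  have hlL := LG.lenL hab
  have hla := LG.E_pos a
  have hlb := LG.E_pos b
  have hluw : M.ℓ s(u, w) = M.ℓ (LG.E a) := by rw [← hEA]
  obtain ⟨u', hu'⟩ := Sym2.mem_iff_exists.mp hwb
  have hEb : LG.E b = s(u', w) := by rw [show LG.E b = _ from hu', Sym2.eq_swap]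
  have hu'w : M.G.Adj u' w := M.G.mem_edgeSet.mp (hEb ▸ LG.E_mem b)
  have hwa : w ∈ LG.E a := by rw [hEA]; exact Sym2.mem_mk_right u w
  have hlu'w : M.ℓ s(u', w) = M.ℓ (LG.E b) := by rw [← hEb]
  have hswap : ∀ s : ℝ, s ∈ Set.Icc 0 (LG.L.ℓ s(a, b)) → s ≥ M.ℓ (LG.E a) / 2 →
      hm.h (LG.L.param a b hab s)
        = M.param u' w hu'w (M.ℓ (LG.E b) / 2 + (LG.L.ℓ s(a, b) - s)) := by
    intro s hs hs2
    have hx : LG.L.param a b hab s = LG.L.param b a hab.symm (LG.L.ℓ s(a, b) - s) := by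
      rw [LG.L.param_symm a b hab (LG.L.ℓ s(a, b) - s), sub_sub_cancel]
    rw [hx, LG.h_param hm hab.symm hu'w hEb hwa ⟨by linarith [hs.2], by linarith⟩]
  rcases le_total r (M.ℓ (LG.E a) / 2) with h1 | h1
  · rw [LG.h_param hm hab huw hEA hwb ⟨ht.1, by linarith⟩,
      LG.h_param hm hab huw hEA hwb ⟨hr.1, h1⟩]
    have h2 := M.dist_param_le_abs huw
      (t := M.ℓ (LG.E a) / 2 + t) (s := M.ℓ (LG.E a) / 2 + r)
      ⟨by linarith [ht.1], by rw [hluw]; linarith⟩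
      ⟨by linarith [hr.1], by rw [hluw]; linarith⟩
    calc dist _ _ ≤ |M.ℓ (LG.E a) / 2 + t - (M.ℓ (LG.E a) / 2 + r)| := h2
      _ = r - t := by rw [show M.ℓ (LG.E a) / 2 + t - (M.ℓ (LG.E a) / 2 + r) = -(r - t) by ring,
            abs_neg, abs_of_nonneg (by linarith)]
  · rcases le_total (M.ℓ (LG.E a) / 2) t with h2 | h2
    · rw [hswap t ht h2, hswap r hr (by linarith)]
      have h3 := M.dist_param_le_abs hu'w
        (t := M.ℓ (LG.E b) / 2 + (LG.L.ℓ s(a, b) - t))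
        (s := M.ℓ (LG.E b) / 2 + (LG.L.ℓ s(a, b) - r))
        ⟨by linarith [ht.2], by rw [hlu'w]; linarith⟩
        ⟨by linarith [hr.2], by rw [hlu'w]; linarith⟩
      calc dist _ _ ≤ _ := h3
        _ = r - t := by
          rw [show M.ℓ (LG.E b) / 2 + (LG.L.ℓ s(a, b) - t)
              - (M.ℓ (LG.E b) / 2 + (LG.L.ℓ s(a, b) - r)) = r - t by ring,
            abs_of_nonneg (by linarith)]
    · -- t ≤ la/2 ≤ r
      rw [LG.h_param hm hab huw hEA hwb ⟨ht.1, h2⟩, hswap r hr h1]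
      have hd1 : dist (M.param u w huw (M.ℓ (LG.E a) / 2 + t)) (M.ι w)
          ≤ M.ℓ (LG.E a) / 2 - t := by
        have h3 := M.dist_param_right huw (t := M.ℓ (LG.E a) / 2 + t)
          ⟨by linarith [ht.1], by rw [hluw]; linarith⟩
        rw [hluw] at h3; linarith
      have hd2 : dist (M.ι w)
          (M.param u' w hu'w (M.ℓ (LG.E b) / 2 + (LG.L.ℓ s(a, b) - r)))
          ≤ r - M.ℓ (LG.E a) / 2 := by
        rw [dist_comm]
        have h3 := M.dist_param_right hu'w
          (t := M.ℓ (LG.E b) / 2 + (LG.L.ℓ s(a, b) - r))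
          ⟨by linarith [hr.2], by rw [hlu'w]; linarith⟩
        rw [hlu'w] at h3; linarith
      calc dist _ _ ≤ _ + _ := dist_triangle _ (M.ι w) _
        _ ≤ (M.ℓ (LG.E a) / 2 - t) + (r - M.ℓ (LG.E a) / 2) := add_le_add hd1 hd2
        _ = r - t := by ring

lemma dist_h_param {a b : LG.L.V} (hab : LG.L.G.Adj a b) {t r : ℝ}
    (ht : t ∈ Set.Icc 0 (LG.L.ℓ s(a, b))) (hr : r ∈ Set.Icc 0 (LG.L.ℓ s(a, b))) :
    dist (hm.h (LG.L.param a b hab t)) (hm.h (LG.L.param a b hab r)) ≤ |t - r| := by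
  rcases le_total t r with h | h
  · calc dist _ _ ≤ r - t := LG.dist_h_param_aux hm hab ht hr h
      _ = |t - r| := by rw [abs_sub_comm, abs_of_nonneg (by linarith)]
  · calc dist _ _ = dist (hm.h (LG.L.param a b hab r)) (hm.h (LG.L.param a b hab t)) :=
        dist_comm _ _
      _ ≤ t - r := LG.dist_h_param_aux hm hab hr ht h
      _ = |t - r| := (abs_of_nonneg (by linarith)).symm

end LineGraphOf

end AuxLG

section AuxWalk

namespace LineGraphOf

variable {M : MetricGraph} (LG : LineGraphOf M)

lemma distL_step {a b : LG.L.V} {p : M.V} (hpa : p ∈ LG.E a) (hpb : p ∈ LG.E b) :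
    dist (LG.L.ι a) (LG.L.ι b) ≤ M.ℓ (LG.E a) / 2 + M.ℓ (LG.E b) / 2 := by
  by_cases hab : a = b
  · subst hab
    simp only [dist_self]
    linarith [LG.E_pos a]
  · have hadj : LG.L.G.Adj a b := (LG.adj_iff a b).mpr ⟨hab, p, hpa, hpb⟩
    calc dist (LG.L.ι a) (LG.L.ι b) ≤ LG.L.ℓ s(a, b) := LG.L.dist_adj hadj
      _ = M.ℓ (LG.E a) / 2 + M.ℓ (LG.E b) / 2 := by rw [LG.lenL hadj]; ring

lemma distL_le_walk {p q : M.V} (W : M.G.Walk p q) : ∀ {a c : LG.L.V},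
    p ∈ LG.E a → q ∈ LG.E c →
    dist (LG.L.ι a) (LG.L.ι c)
      ≤ M.ℓ (LG.E a) / 2 + M.ℓ (LG.E c) / 2 + (W.edges.map M.ℓ).sum := by
  induction W with
  | nil =>
    intro a c hpa hpc
    simpa using LG.distL_step hpa hpc
  | @cons p p1 q h' W' ih =>
    intro a c hpa hqc
    set b := LG.vEquiv.symm ⟨s(p, p1), M.G.mem_edgeSet.mpr h'⟩ with hb
    have hEb : LG.E b = s(p, p1) := by
      simp only [LineGraphOf.E, hb, Equiv.apply_symm_apply]
    have h1 : dist (LG.L.ι a) (LG.L.ι b)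
        ≤ M.ℓ (LG.E a) / 2 + M.ℓ (LG.E b) / 2 :=
      LG.distL_step hpa (by rw [hEb]; exact Sym2.mem_mk_left p p1)
    have h2 := ih (a := b) (c := c) (by rw [hEb]; exact Sym2.mem_mk_right p p1) hqc
    have h3 : ((SimpleGraph.Walk.cons h' W').edges.map M.ℓ).sum
        = M.ℓ s(p, p1) + (W'.edges.map M.ℓ).sum := by
      simp [SimpleGraph.Walk.edges_cons]
    have h4 : M.ℓ (LG.E b) = M.ℓ s(p, p1) := by rw [hEb]
    calc dist (LG.L.ι a) (LG.L.ι c) ≤ _ + _ := dist_triangle _ (LG.L.ι b) _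
      _ ≤ (M.ℓ (LG.E a) / 2 + M.ℓ (LG.E b) / 2)
          + (M.ℓ (LG.E b) / 2 + M.ℓ (LG.E c) / 2 + (W'.edges.map M.ℓ).sum) :=
        add_le_add h1 h2
      _ ≤ M.ℓ (LG.E a) / 2 + M.ℓ (LG.E c) / 2
          + ((SimpleGraph.Walk.cons h' W').edges.map M.ℓ).sum := by
        rw [h3]; linarith [h4.le, h4.ge]

lemma distL_le_distG {a c : LG.L.V} {p q : M.V} (hpa : p ∈ LG.E a) (hqc : q ∈ LG.E c) :
    dist (LG.L.ι a) (LG.L.ι c)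
      ≤ M.ℓ (LG.E a) / 2 + M.ℓ (LG.E c) / 2 + dist (M.ι p) (M.ι q) := by
  have h1 : dist (LG.L.ι a) (LG.L.ι c) - M.ℓ (LG.E a) / 2 - M.ℓ (LG.E c) / 2
      ≤ dist (M.ι p) (M.ι q) :=
    M.le_dist_vertex (fun W => by linarith [LG.distL_le_walk W hpa hqc])
  linarith

variable (hm : CanonicalMap M LG)

lemma distG_h_adj {a b : LG.L.V} (hab : LG.L.G.Adj a b) :
    dist (hm.h (LG.L.ι a)) (hm.h (LG.L.ι b)) ≤ LG.L.ℓ s(a, b) := by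
  obtain ⟨u, w, huw, hEA, hwb⟩ := LG.adj_data hab
  obtain ⟨u', hu'⟩ := Sym2.mem_iff_exists.mp hwb
  have hEb : LG.E b = s(u', w) := by rw [show LG.E b = _ from hu', Sym2.eq_swap]
  have hu'w : M.G.Adj u' w := M.G.mem_edgeSet.mp (hEb ▸ LG.E_mem b)
  have hwa : w ∈ LG.E a := by rw [hEA]; exact Sym2.mem_mk_right u w
  have hluw : M.ℓ s(u, w) = M.ℓ (LG.E a) := by rw [← hEA]
  have hlu'w : M.ℓ s(u', w) = M.ℓ (LG.E b) := by rw [← hEb]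
  have hla := LG.E_pos a
  have hlb := LG.E_pos b
  rw [LG.h_vertex hm hab huw hEA hwb, LG.h_vertex hm hab.symm hu'w hEb hwa]
  have hd1 : dist (M.param u w huw (M.ℓ (LG.E a) / 2)) (M.ι w) ≤ M.ℓ (LG.E a) / 2 := by
    have h3 := M.dist_param_right huw (t := M.ℓ (LG.E a) / 2)
      ⟨by linarith, by rw [hluw]; linarith⟩
    rw [hluw] at h3; linarith
  have hd2 : dist (M.ι w) (M.param u' w hu'w (M.ℓ (LG.E b) / 2)) ≤ M.ℓ (LG.E b) / 2 := by
    rw [dist_comm]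
    have h3 := M.dist_param_right hu'w (t := M.ℓ (LG.E b) / 2)
      ⟨by linarith, by rw [hlu'w]; linarith⟩
    rw [hlu'w] at h3; linarith
  calc dist _ _ ≤ _ + _ := dist_triangle _ (M.ι w) _
    _ ≤ M.ℓ (LG.E a) / 2 + M.ℓ (LG.E b) / 2 := add_le_add hd1 hd2
    _ = LG.L.ℓ s(a, b) := by rw [LG.lenL hab]; ring

lemma distG_h_vertex (a c : LG.L.V) :
    dist (hm.h (LG.L.ι a)) (hm.h (LG.L.ι c)) ≤ dist (LG.L.ι a) (LG.L.ι c) := by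
  have key : ∀ {a c : LG.L.V} (W : LG.L.G.Walk a c),
      dist (hm.h (LG.L.ι a)) (hm.h (LG.L.ι c)) ≤ (W.edges.map LG.L.ℓ).sum := by
    intro a c W
    induction W with
    | nil => simp
    | @cons a b c h' W' ih =>
      have h3 : ((SimpleGraph.Walk.cons h' W').edges.map LG.L.ℓ).sum
          = LG.L.ℓ s(a, b) + (W'.edges.map LG.L.ℓ).sum := by
        simp [SimpleGraph.Walk.edges_cons]
      calc dist _ _ ≤ _ + _ := dist_triangle _ (hm.h (LG.L.ι b)) _
        _ ≤ LG.L.ℓ s(a, b) + (W'.edges.map LG.L.ℓ).sum :=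
          add_le_add (LG.distG_h_adj hm h') ih
        _ = _ := h3.symm
  exact LG.L.le_dist_vertex (fun W => key W)

lemma distG_h_vertex_pt (a : LG.L.V) (y : LG.L.X) :
    dist (hm.h (LG.L.ι a)) (hm.h y) ≤ dist (LG.L.ι a) y := by
  obtain ⟨c, d, hcd, r, hr, rfl⟩ := LG.L.cover y
  rw [dist_comm (LG.L.ι a)]
  apply LG.L.le_dist hcd hr (LG.L.ι a)
  rintro z (hz | ⟨r', hr', hia, rfl⟩)
  · simp only [Set.mem_insert_iff, Set.mem_singleton_iff] at hz
    rcases hz with rfl | rfl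
    · calc dist (hm.h (LG.L.ι a)) (hm.h (LG.L.param c d hcd r))
          ≤ dist (hm.h (LG.L.ι a)) (hm.h (LG.L.ι c))
            + dist (hm.h (LG.L.ι c)) (hm.h (LG.L.param c d hcd r)) := dist_triangle _ _ _
        _ ≤ dist (LG.L.ι c) (LG.L.ι a) + r := by
            rw [dist_comm (hm.h (LG.L.ι c))]
            exact add_le_add (by rw [dist_comm (LG.L.ι c)]; exact LG.distG_h_vertex hm a c)
              (LG.dist_h_left hm hcd hr)
        _ = r + dist (LG.L.ι c) (LG.L.ι a) := by ring
    · calc dist (hm.h (LG.L.ι a)) (hm.h (LG.L.param c d hcd r))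
          ≤ dist (hm.h (LG.L.ι a)) (hm.h (LG.L.ι d))
            + dist (hm.h (LG.L.ι d)) (hm.h (LG.L.param c d hcd r)) := dist_triangle _ _ _
        _ ≤ dist (LG.L.ι d) (LG.L.ι a) + (LG.L.ℓ s(c, d) - r) := by
            rw [dist_comm (hm.h (LG.L.ι d))]
            exact add_le_add (by rw [dist_comm (LG.L.ι d)]; exact LG.distG_h_vertex hm a d)
              (LG.dist_h_right hm hcd hr)
        _ = (LG.L.ℓ s(c, d) - r) + dist (LG.L.ι d) (LG.L.ι a) := by ring
  · rw [hia]
    calc dist (hm.h (LG.L.param c d hcd r')) (hm.h (LG.L.param c d hcd r))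
        ≤ |r' - r| := LG.dist_h_param hm hcd hr' hr
      _ = |r - r'| := abs_sub_comm _ _

lemma distG_h_le (x y : LG.L.X) : dist (hm.h x) (hm.h y) ≤ dist x y := by
  obtain ⟨a, b, hab, t, ht, rfl⟩ := LG.L.cover x
  apply LG.L.le_dist hab ht y
  rintro z (hz | ⟨r', hr', hy, rfl⟩)
  · simp only [Set.mem_insert_iff, Set.mem_singleton_iff] at hz
    rcases hz with rfl | rfl
    · calc dist (hm.h (LG.L.param a b hab t)) (hm.h y)
          ≤ dist (hm.h (LG.L.param a b hab t)) (hm.h (LG.L.ι a))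
            + dist (hm.h (LG.L.ι a)) (hm.h y) := dist_triangle _ _ _
        _ ≤ t + dist (LG.L.ι a) y :=
          add_le_add (LG.dist_h_left hm hab ht) (LG.distG_h_vertex_pt hm a y)
    · calc dist (hm.h (LG.L.param a b hab t)) (hm.h y)
          ≤ dist (hm.h (LG.L.param a b hab t)) (hm.h (LG.L.ι b))
            + dist (hm.h (LG.L.ι b)) (hm.h y) := dist_triangle _ _ _
        _ ≤ (LG.L.ℓ s(a, b) - t) + dist (LG.L.ι b) y :=
          add_le_add (LG.dist_h_right hm hab ht) (LG.distG_h_vertex_pt hm b y)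
  · rw [hy]
    exact LG.dist_h_param hm hab ht hr'

end LineGraphOf

end AuxWalk

section AuxMain

namespace LineGraphOf

variable {M : MetricGraph} (LG : LineGraphOf M)

lemma rep_half (x : LG.L.X) : ∃ (a b : LG.L.V) (hab : LG.L.G.Adj a b) (t : ℝ),
    x = LG.L.param a b hab t ∧ 0 ≤ t ∧ t ≤ M.ℓ (LG.E a) / 2 ∧ t ≤ LG.L.ℓ s(a, b) := by
  obtain ⟨a, b, hab, t, ht, rfl⟩ := LG.L.cover x
  have hlL := LG.lenL hab
  have hswap : LG.L.ℓ s(b, a) = LG.L.ℓ s(a, b) := by rw [Sym2.eq_swap]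
  have hlLba := LG.lenL hab.symm
  rcases le_total t (M.ℓ (LG.E a) / 2) with h | h
  · exact ⟨a, b, hab, t, rfl, ht.1, h, ht.2⟩
  · refine ⟨b, a, hab.symm, LG.L.ℓ s(a, b) - t, ?_, by linarith [ht.2], ?_, ?_⟩
    · rw [LG.L.param_symm a b hab (LG.L.ℓ s(a, b) - t), sub_sub_cancel]
    · linarith [ht.1]
    · rw [hswap]; linarith [ht.1]

variable (hm : CanonicalMap M LG)

lemma distL_sub_le (lm : ℝ) (hub : ∀ e ∈ M.G.edgeSet, M.ℓ e ≤ lm) (x y : LG.L.X) :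
    dist x y ≤ dist (hm.h x) (hm.h y) + 2 * lm := by
  obtain ⟨a, b, hab, t, rfl, ht0, hta, htL⟩ := LG.rep_half x
  obtain ⟨c, d, hcd, r, rfl, hr0, hrc, hrL⟩ := LG.rep_half y
  obtain ⟨u, w, huw, hEA, hwb⟩ := LG.adj_data hab
  obtain ⟨u', w', hu'w', hEC, hw'd⟩ := LG.adj_data hcd
  have hla := LG.E_pos a
  have hlc := LG.E_pos c
  have hluw : M.ℓ s(u, w) = M.ℓ (LG.E a) := by rw [← hEA]
  have hlu'w' : M.ℓ s(u', w') = M.ℓ (LG.E c) := by rw [← hEC]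
  have hmla : M.ℓ (LG.E a) ≤ lm := hub _ (LG.E_mem a)
  have hmlc : M.ℓ (LG.E c) ≤ lm := hub _ (LG.E_mem c)
  have hua : u ∈ LG.E a := by rw [hEA]; exact Sym2.mem_mk_left u w
  have hwa : w ∈ LG.E a := by rw [hEA]; exact Sym2.mem_mk_right u w
  have hu'c : u' ∈ LG.E c := by rw [hEC]; exact Sym2.mem_mk_left u' w'
  have hw'c : w' ∈ LG.E c := by rw [hEC]; exact Sym2.mem_mk_right u' w'
  have hxg : hm.h (LG.L.param a b hab t)
      = M.param u w huw (M.ℓ (LG.E a) / 2 + t) :=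
    LG.h_param hm hab huw hEA hwb ⟨ht0, hta⟩
  have hyg : hm.h (LG.L.param c d hcd r)
      = M.param u' w' hu'w' (M.ℓ (LG.E c) / 2 + r) :=
    LG.h_param hm hcd hu'w' hEC hw'd ⟨hr0, hrc⟩
  have K1 : dist (LG.L.param a b hab t) (LG.L.ι a) ≤ t :=
    LG.L.dist_param_left hab ⟨ht0, htL⟩
  have K1' : dist (LG.L.param c d hcd r) (LG.L.ι c) ≤ r :=
    LG.L.dist_param_left hcd ⟨hr0, hrL⟩
  have K3 : ∀ p q : M.V, p ∈ LG.E a → q ∈ LG.E c →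
      dist (LG.L.param a b hab t) (LG.L.param c d hcd r)
        ≤ t + r + (M.ℓ (LG.E a) / 2 + M.ℓ (LG.E c) / 2 + dist (M.ι p) (M.ι q)) := by
    intro p q hp hq
    have h1 := dist_triangle4 (LG.L.param a b hab t) (LG.L.ι a) (LG.L.ι c)
      (LG.L.param c d hcd r)
    have h2 := LG.distL_le_distG hp hq
    have h3 : dist (LG.L.ι c) (LG.L.param c d hcd r) ≤ r := by
      rw [dist_comm]; exact K1'
    linarith
  have hyw' : dist (hm.h (LG.L.param c d hcd r)) (M.ι w') ≤ M.ℓ (LG.E c) / 2 - r := by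
    rw [hyg]
    have h3 := M.dist_param_right hu'w' (t := M.ℓ (LG.E c) / 2 + r)
      ⟨by linarith, by rw [hlu'w']; linarith⟩
    rw [hlu'w'] at h3; linarith
  have main : dist (LG.L.param a b hab t) (LG.L.param c d hcd r) - 2 * lm
      ≤ dist (hm.h (LG.L.param a b hab t)) (hm.h (LG.L.param c d hcd r)) := by
    rw [hxg]
    apply M.le_dist huw (t := M.ℓ (LG.E a) / 2 + t)
      ⟨by linarith, by rw [hluw]; linarith⟩ (hm.h (LG.L.param c d hcd r))
    have claim : ∀ p : M.V, p ∈ LG.E a →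
        dist (LG.L.param a b hab t) (LG.L.param c d hcd r) - 2 * lm
          ≤ (M.ℓ (LG.E a) / 2 - t) + dist (M.ι p) (hm.h (LG.L.param c d hcd r)) := by
      intro p hp
      have goal2 : dist (LG.L.param a b hab t) (LG.L.param c d hcd r) - 2 * lm
          - (M.ℓ (LG.E a) / 2 - t) ≤ dist (hm.h (LG.L.param c d hcd r)) (M.ι p) := by
        rw [hyg]
        apply M.le_dist hu'w' (t := M.ℓ (LG.E c) / 2 + r)
          ⟨by linarith, by rw [hlu'w']; linarith⟩ (M.ι p)
        rintro z2 (hz2 | ⟨ρ', hρ', hip, rfl⟩)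
        · simp only [Set.mem_insert_iff, Set.mem_singleton_iff] at hz2
          rcases hz2 with rfl | rfl
          · have hK := K3 p u' hp hu'c
            have hcc := dist_comm (M.ι u') (M.ι p)
            linarith
          · have hK := K3 p w' hp hw'c
            have hcc := dist_comm (M.ι w') (M.ι p)
            rw [hlu'w']
            linarith
        · -- ι p = param u' w' ρ'
          have hρ'2 : ρ' ≤ M.ℓ (LG.E c) := by rw [← hlu'w']; exact hρ'.2
          have hd1 : dist (M.ι p) (M.ι u') ≤ ρ' := by
            rw [hip]; exact M.dist_param_left hu'w' hρ'
          have hd2 : dist (M.ι p) (M.ι w') ≤ M.ℓ (LG.E c) - ρ' := by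
            rw [hip]
            have h3 := M.dist_param_right hu'w' hρ'
            rw [hlu'w'] at h3; exact h3
          rcases le_total ρ' (M.ℓ (LG.E c) / 2) with hc1 | hc1
          · have hK := K3 p u' hp hu'c
            rcases abs_cases (M.ℓ (LG.E c) / 2 + r - ρ') with ⟨he, hs⟩ | ⟨he, hs⟩ <;>
              rw [he] <;> linarith
          · have hK := K3 p w' hp hw'c
            rcases abs_cases (M.ℓ (LG.E c) / 2 + r - ρ') with ⟨he, hs⟩ | ⟨he, hs⟩ <;>
              rw [he] <;> linarith
      have hcc := dist_comm (hm.h (LG.L.param c d hcd r)) (M.ι p)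
      linarith
    rintro z (hz | ⟨ρ, hρ, hyeq, rfl⟩)
    · simp only [Set.mem_insert_iff, Set.mem_singleton_iff] at hz
      rcases hz with rfl | rfl
      · have := claim u hua
        linarith
      · have := claim w hwa
        rw [hluw]
        linarith
    · -- hm.h y = param u w ρ
      have hρ2 : ρ ≤ M.ℓ (LG.E a) := by rw [← hluw]; exact hρ.2
      have hd1 : dist (hm.h (LG.L.param c d hcd r)) (M.ι u) ≤ ρ := by
        rw [hyeq]; exact M.dist_param_left huw hρ
      have hd2 : dist (hm.h (LG.L.param c d hcd r)) (M.ι w) ≤ M.ℓ (LG.E a) - ρ := by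
        rw [hyeq]
        have h3 := M.dist_param_right huw hρ
        rw [hluw] at h3; exact h3
      rcases le_total ρ (M.ℓ (LG.E a) / 2) with hc1 | hc1
      · have hK := K3 u w' hua hw'c
        have htri : dist (M.ι u) (M.ι w')
            ≤ ρ + (M.ℓ (LG.E c) / 2 - r) := by
          calc dist (M.ι u) (M.ι w')
              ≤ dist (M.ι u) (hm.h (LG.L.param c d hcd r))
                + dist (hm.h (LG.L.param c d hcd r)) (M.ι w') := dist_triangle _ _ _
            _ ≤ ρ + (M.ℓ (LG.E c) / 2 - r) :=
              add_le_add (by rw [dist_comm]; exact hd1) hyw'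
        rcases abs_cases (M.ℓ (LG.E a) / 2 + t - ρ) with ⟨he, hs⟩ | ⟨he, hs⟩ <;>
          rw [he] <;> linarith
      · have hK := K3 w w' hwa hw'c
        have htri : dist (M.ι w) (M.ι w')
            ≤ (M.ℓ (LG.E a) - ρ) + (M.ℓ (LG.E c) / 2 - r) := by
          calc dist (M.ι w) (M.ι w')
              ≤ dist (M.ι w) (hm.h (LG.L.param c d hcd r))
                + dist (hm.h (LG.L.param c d hcd r)) (M.ι w') := dist_triangle _ _ _
            _ ≤ (M.ℓ (LG.E a) - ρ) + (M.ℓ (LG.E c) / 2 - r) :=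
              add_le_add (by rw [dist_comm]; exact hd2) hyw'
        rcases abs_cases (M.ℓ (LG.E a) / 2 + t - ρ) with ⟨he, hs⟩ | ⟨he, hs⟩ <;>
          rw [he] <;> linarith
  linarith

end LineGraphOf

end AuxMain

section AuxFull

namespace LineGraphOf

variable {M : MetricGraph} (LG : LineGraphOf M) (hm : CanonicalMap M LG)

lemma ofReal_le_lmax {e : Sym2 M.V} (he : e ∈ M.G.edgeSet) :
    ENNReal.ofReal (M.ℓ e) ≤ M.lmax :=
  le_iSup (fun e : M.G.edgeSet => ENNReal.ofReal (M.ℓ e.1)) ⟨e, he⟩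

lemma full (z : M.X) : ∃ x : LG.L.X, edist (hm.h x) z ≤ M.lmax / 2 := by
  obtain ⟨u, v, huv, t0, ht0, rfl⟩ := M.cover z
  set a := LG.vEquiv.symm ⟨s(u, v), M.G.mem_edgeSet.mpr huv⟩ with ha
  have hEa : LG.E a = s(u, v) := by
    simp only [LineGraphOf.E, ha, Equiv.apply_symm_apply]
  obtain ⟨b, hab⟩ := LG.exists_adj a
  obtain ⟨u₀, w₀, h₀, hEA₀, hw₀b⟩ := LG.adj_data hab
  have hva := LG.h_vertex hm hab h₀ hEA₀ hw₀b
  have hsym : s(u₀, w₀) = s(u, v) := hEA₀.symm.trans hEa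
  have hl0 := M.ℓ_nonneg huv
  have hmid : hm.h (LG.L.ι a) = M.param u v huv (M.ℓ s(u, v) / 2) := by
    rcases Sym2.eq_iff.mp hsym with ⟨h1, h2⟩ | ⟨h1, h2⟩
    · subst h1; subst h2
      rw [hva, hEa]
    · subst h1; subst h2
      rw [hva, hEa]
      calc M.param u₀ w₀ h₀ (M.ℓ s(w₀, u₀) / 2)
          = M.param w₀ u₀ huv (M.ℓ s(w₀, u₀) - M.ℓ s(w₀, u₀) / 2) :=
            M.param_symm w₀ u₀ huv (M.ℓ s(w₀, u₀) / 2)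
        _ = M.param w₀ u₀ huv (M.ℓ s(w₀, u₀) / 2) := by
            rw [show M.ℓ s(w₀, u₀) - M.ℓ s(w₀, u₀) / 2 = M.ℓ s(w₀, u₀) / 2 by ring]
  have hd : dist (hm.h (LG.L.ι a)) (M.param u v huv t0) ≤ M.ℓ s(u, v) / 2 := by
    rw [hmid]
    have h2 := M.dist_param_le_abs huv (t := M.ℓ s(u, v) / 2)
      ⟨by linarith, by linarith⟩ ht0
    calc dist _ _ ≤ |M.ℓ s(u, v) / 2 - t0| := h2
      _ ≤ M.ℓ s(u, v) / 2 := abs_le.mpr ⟨by linarith [ht0.2], by linarith [ht0.1]⟩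
  refine ⟨LG.L.ι a, ?_⟩
  rw [edist_dist]
  calc ENNReal.ofReal (dist (hm.h (LG.L.ι a)) (M.param u v huv t0))
      ≤ ENNReal.ofReal (M.ℓ s(u, v) / 2) := ENNReal.ofReal_le_ofReal hd
    _ ≤ M.lmax / 2 := by
        rw [ENNReal.le_div_iff_mul_le (Or.inl two_ne_zero) (Or.inl ENNReal.ofNat_ne_top)]
        have h3 : ENNReal.ofReal (M.ℓ s(u, v) / 2) * 2 = ENNReal.ofReal (M.ℓ s(u, v)) := by
          rw [show (2 : ℝ≥0∞) = ENNReal.ofReal 2 by norm_num,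
            ← ENNReal.ofReal_mul (by linarith)]
          norm_num
        rw [h3]
        exact ofReal_le_lmax (M.G.mem_edgeSet.mpr huv)

end LineGraphOf

end AuxFull

/-- The canonical map `h : L(G) → G` is an `(l_max/2)`-full
`(1, 2 l_max)`-quasi-isometry: `d_{L(G)}(x,y) − 2 l_max ≤ d_G(h(x),h(y)) ≤ d_{L(G)}(x,y)`
for all `x, y`, and every point of `G` is within distance `l_max/2` of the image of `h`. -/
theorem canonicalMap_quasiIsometry (M : MetricGraph) (LG : LineGraphOf M)
    (hm : CanonicalMap M LG) :
    (∀ x y : LG.L.X, edist x y - 2 * M.lmax ≤ edist (hm.h x) (hm.h y)) ∧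
    (∀ x y : LG.L.X, edist (hm.h x) (hm.h y) ≤ edist x y) ∧
    (∀ z : M.X, ∃ x : LG.L.X, edist (hm.h x) z ≤ M.lmax / 2) := by
  refine ⟨?_, ?_, fun z => LG.full hm z⟩
  · intro x y
    rcases eq_or_ne M.lmax ⊤ with htop | htop
    · rw [htop]
      have h1 : (2 : ℝ≥0∞) * ⊤ = ⊤ := by simp
      rw [h1, ENNReal.sub_top]
      exact zero_le
    · have hub : ∀ e ∈ M.G.edgeSet, M.ℓ e ≤ M.lmax.toReal := by
        intro e he
        have h1 := LineGraphOf.ofReal_le_lmax (M := M) he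
        have h2 := ENNReal.toReal_mono htop h1
        rwa [ENNReal.toReal_ofReal (M.ℓ_pos e he).le] at h2
      have key := LG.distL_sub_le hm M.lmax.toReal hub x y
      rw [edist_dist, edist_dist, tsub_le_iff_right]
      have h3 : ENNReal.ofReal (2 * M.lmax.toReal) = 2 * M.lmax := by
        rw [ENNReal.ofReal_mul (by norm_num : (0:ℝ) ≤ 2), ENNReal.ofReal_toReal htop]
        norm_num
      calc ENNReal.ofReal (dist x y)
          ≤ ENNReal.ofReal (dist (hm.h x) (hm.h y) + 2 * M.lmax.toReal) :=
            ENNReal.ofReal_le_ofReal key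
        _ = ENNReal.ofReal (dist (hm.h x) (hm.h y)) + ENNReal.ofReal (2 * M.lmax.toReal) :=
            ENNReal.ofReal_add dist_nonneg (by positivity)
        _ = ENNReal.ofReal (dist (hm.h x) (hm.h y)) + 2 * M.lmax := by rw [h3]
  · intro x y
    rw [edist_dist, edist_dist]
    exact ENNReal.ofReal_le_ofReal (LG.distG_h_le hm x y)
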